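/- Let H_i, H_j : ℝ^d × ℝ → ℝ be C² with everywhere positive definite Hessian and superlinear, and let A : ℝ^d → ℝ be C² with everywhere positive definite Hessian and satisfy A(p') ≥ max(min_p H_i(p',p), min_p H_j(p',p)) for all p'. For λ ≥ min_p H_i(p',p) let π_i^+(p',λ) be the unique p ≥ argmin H_i(p',·) with H_i(p',p) = λ, and π_j^-(p',λ) the unique p ≤ argmin H_j(p',·) with H_j(p',p) = λ. For Z = (z', z_i, z_j) ∈ ℝ^d × [0,+∞) × (−∞,0], set 𝔊(Z) = sup { p'·z' + p_i z_i + p_j z_j − λ : H_i(p',p_i) = H_j(p',p_j) = λ ≥ A(p') }. Suppose (p',p_i,p_j,λ) and (q',q_i,q_j,μ) both lie in the constraint set (H_i(p',p_i) = H_j(p',p_j) = λ ≥ A(p') and H_i(q',q_i) = H_j(q',q_j) = μ ≥ A(q')), realize 𝔊(Z) (i.e. 𝔊(Z) = p'·z' + p_i z_i + p_j z_j − λ = q'·z' + q_i z_i + q_j z_j − μ), and admit multipliers α = (α_i,α_j,α_0) and β = (β_i,β_j,β_0), nonnegative summing to 1, with z_i = α_i ∂_p H_i(p',p_i), z_j =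 α_j ∂_p H_j(p',p_j), z' = α_i ∇_{p'}H_i(p',p_i) + α_j ∇_{p'}H_j(p',p_j) + α_0 ∇A(p'), and the analogous equations for (β, q', q_i, q_j). Then: λ = μ; p' = q'; either p_i = q_i = π_i^+(p',λ) or α_i = β_i = 0 = z_i; either p_j = q_j = π_j^-(p',λ) or α_j = β_j = 0 = z_j; and moreover, setting p̂_i = π_i^+(p',λ) and p̂_j = π_j^-(p',λ), one has 𝔊(Z) = p'·z' + p̂_i z_i + p̂_j z_j − λ together with z_i = α_i ∂_p H_i(p',p̂_i), z_j = α_j ∂_p H_j(p',p̂_j), z' = α_i ∇_{p'}H_i(p',p̂_i) + α_j ∇_{p'}H_j(p',p̂_j) + α_0 ∇A(p'). -/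

import Mathlib

open scoped RealInnerProductSpace

open Set

section aux
variable {E : Type*} [NormedAddCommGroup E] [NormedSpace ℝ E]

lemma vmu_strictConvexOn {f : E → ℝ} (hf : ContDiff ℝ 2 f)
    (hpos : ∀ x v, v ≠ 0 → 0 < iteratedFDeriv ℝ 2 f x ![v, v]) :
    StrictConvexOn ℝ (univ : Set E) f := by
  refine ⟨convex_univ, fun x _ y _ hxy a b ha hb hab => ?_⟩
  set v := y - x with hv
  have hvne : v ≠ 0 := sub_ne_zero.mpr (Ne.symm hxy)
  set c : ℝ → E := fun t => x + t • v with hc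
  have hcd : ∀ t : ℝ, HasDerivAt c v t := by
    intro t
    simpa [hc] using ((hasDerivAt_id t).smul_const v).const_add x
  have hfd : Differentiable ℝ f := hf.differentiable (by norm_num)
  have hgd : ∀ t, HasDerivAt (fun t => f (c t)) (fderiv ℝ f (c t) v) t :=
    fun t => (hfd (c t)).hasFDerivAt.comp_hasDerivAt t (hcd t)
  have hf2 : ContDiff ℝ 1 (fderiv ℝ f) := hf.fderiv_right (by norm_num)
  have hg1d : ∀ t, HasDerivAt (fun t => fderiv ℝ f (c t) v)
      (fderiv ℝ (fderiv ℝ f) (c t) v v) t := by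
    intro t
    have h2 : HasDerivAt (fun t => fderiv ℝ f (c t))
        (fderiv ℝ (fderiv ℝ f) (c t) v) t :=
      ((hf2.differentiable one_ne_zero) (c t)).hasFDerivAt.comp_hasDerivAt t (hcd t)
    exact (ContinuousLinearMap.apply ℝ ℝ v).hasFDerivAt.comp_hasDerivAt t h2
  have hderiv1 : deriv (fun t => f (c t)) = fun t => fderiv ℝ f (c t) v :=
    funext fun t => (hgd t).deriv
  have hkey : ∀ t : ℝ, 0 < deriv^[2] (fun t => f (c t)) t := by
    intro t
    have : deriv^[2] (fun t => f (c t)) t = fderiv ℝ (fderiv ℝ f) (c t) v v := by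
      simp only [Function.iterate_succ, Function.iterate_zero, Function.comp_apply, id_eq,
        hderiv1]
      exact (hg1d t).deriv
    rw [this]
    have := hpos (c t) v hvne
    rwa [iteratedFDeriv_two_apply, Matrix.cons_val_zero, Matrix.cons_val_one, Matrix.cons_val_zero]
      at this
  have hgc : Continuous fun t : ℝ => f (c t) :=
    hf.continuous.comp (by continuity)
  have hsc := strictConvexOn_univ_of_deriv2_pos hgc hkey
  have h01 : (0:ℝ) ≠ 1 := by norm_num
  have := hsc.2 (mem_univ (0:ℝ)) (mem_univ (1:ℝ)) h01 ha hb hab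
  have hc0 : c 0 = x := by simp [hc]
  have hc1 : c 1 = y := by simp [hc, hv]
  have hcb : c (a • (0:ℝ) + b • 1) = a • x + b • y := by
    have hb' : a • (0:ℝ) + b • 1 = b := by simp
    rw [hb']
    simp only [hc, hv]
    have : a = 1 - b := by linarith
    rw [this]; module
  simp only at this
  rw [hcb, hc0, hc1] at this
  simpa using this
end aux

section onedim
variable {h : ℝ → ℝ}

lemma vmu_slice {E : Type*} [NormedAddCommGroup E] [NormedSpace ℝ E] {H : E × ℝ → ℝ}
    (hsc : StrictConvexOn ℝ (univ : Set (E × ℝ)) H) (p' : E) :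
    StrictConvexOn ℝ (univ : Set ℝ) (fun p => H (p', p)) := by
  refine ⟨convex_univ, fun a _ b _ hab s t hs ht hst => ?_⟩
  have hne : ((p', a) : E × ℝ) ≠ (p', b) := by simp [hab]
  have := hsc.2 (mem_univ ((p', a) : E × ℝ)) (mem_univ ((p', b) : E × ℝ)) hne hs ht hst
  have hcombo : s • ((p', a) : E × ℝ) + t • ((p', b) : E × ℝ) = (p', s • a + t • b) := by
    rw [Prod.smul_mk, Prod.smul_mk, Prod.mk_add_mk, Convex.combo_self hst p']
  rw [hcombo] at this
  simpa using this

lemma vmu_strictMono_right (hsc : StrictConvexOn ℝ (univ : Set ℝ) h) {ρ : ℝ}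
    (hmin : ∀ q, h ρ ≤ h q) {a b : ℝ} (hρa : ρ ≤ a) (hab : a < b) : h a < h b := by
  rcases eq_or_lt_of_le hρa with he | hlt
  · have hne : ρ ≠ b := by rw [← he] at hab; exact ne_of_lt hab
    have := hsc.2 (mem_univ ρ) (mem_univ b) hne (by norm_num : (0:ℝ) < 1/2)
      (by norm_num : (0:ℝ) < 1/2) (by norm_num)
    have h2 := hmin ((1/2 : ℝ) • ρ + (1/2 : ℝ) • b)
    simp only [smul_eq_mul] at h2
    rw [← he]
    simp only [smul_eq_mul] at this
    linarith
  · set t := (a - ρ) / (b - ρ) with ht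
    have hbρ : 0 < b - ρ := by linarith
    have ht0 : 0 < t := div_pos (by linarith) hbρ
    have ht1 : t < 1 := (div_lt_one hbρ).mpr (by linarith)
    have hne : ρ ≠ b := by linarith
    have hcombo : (1 - t) • ρ + t • b = a := by
      have htb : t * (b - ρ) = a - ρ := by rw [ht]; exact div_mul_cancel₀ _ hbρ.ne'
      simp only [smul_eq_mul]; linear_combination htb
    have := hsc.2 (mem_univ ρ) (mem_univ b) hne (by linarith : (0:ℝ) < 1 - t) ht0 (by ring)
    rw [hcombo] at this
    have h2 := hmin b
    simp only [smul_eq_mul] at this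
    nlinarith

lemma vmu_strictMono_left (hsc : StrictConvexOn ℝ (univ : Set ℝ) h) {ρ : ℝ}
    (hmin : ∀ q, h ρ ≤ h q) {a b : ℝ} (hab : a < b) (hbρ : b ≤ ρ) : h b < h a := by
  have hsc' : StrictConvexOn ℝ (univ : Set ℝ) (fun x => h (-x)) := by
    refine ⟨convex_univ, fun x _ y _ hxy s t hs ht hst => ?_⟩
    have hne : -x ≠ -y := fun hc => hxy (by linarith [neg_injective hc])
    have := hsc.2 (mem_univ (-x)) (mem_univ (-y)) hne hs ht hst
    have hco : s • -x + t • -y = -(s • x + t • y) := by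
      simp only [smul_eq_mul]; ring
    rw [hco] at this
    simpa using this
  have hmin' : ∀ q, (fun x => h (-x)) (-ρ) ≤ (fun x => h (-x)) q := by
    intro q; simpa using hmin (-q)
  have := vmu_strictMono_right hsc' hmin' (by linarith : -ρ ≤ -b) (by linarith : -b < -a)
  simpa using this

lemma vmu_min_of_deriv_zero (hc : ConvexOn ℝ (univ : Set ℝ) h) (hd : Differentiable ℝ h)
    {p : ℝ} (hp : deriv h p = 0) : ∀ q, h p ≤ h q := by
  intro q
  rcases lt_trichotomy p q with hpq | hpq | hpq
  · have := hc.deriv_le_slope (mem_univ p) (mem_univ q) hpq (hd p)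
    rw [hp, slope_def_field] at this
    have h2 := (le_div_iff₀ (by linarith : (0:ℝ) < q - p)).mp this
    linarith
  · rw [hpq]
  · have := hc.slope_le_deriv (mem_univ q) (mem_univ p) hpq (hd p)
    rw [hp, slope_def_field] at this
    have h2 := (div_le_iff₀ (by linarith : (0:ℝ) < p - q)).mp this
    linarith

end onedim


set_option maxHeartbeats 1000000 in
/-- Uniqueness of the maximiser, ij-version: with smooth uniformly convex
superlinear `Hi, Hj`, a smooth uniformly convex limiter `A ≥ max(min Hi, min Hj)`, partial
inverses `πip p' λ` (the unique `p ≥ argmin Hi (p', ·)` with `Hi (p', p) = λ`) and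
`πjm p' λ` (the unique `p ≤ argmin Hj (p', ·)` with `Hj (p', p) = λ`), if two feasible
points `(p', p_i, p_j, λ)` and `(q', q_i, q_j, μ)` both realize the supremum `𝔊 Z` for
`Z = (z', z_i, z_j)`, `z_i ≥ 0 ≥ z_j`, and both admit simplex multipliers, then `λ = μ`,
`p' = q'`, `p_i = q_i = πip p' λ` unless `α_i = β_i = 0 = z_i`, `p_j = q_j = πjm p' λ`
unless `α_j = β_j = 0 = z_j`, and the supremum is also realized at
`(p', πip p' λ, πjm p' λ, λ)` with the same multipliers. -/
theorem vertex_maximiser_unique_ij (d : ℕ)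
    (Hi Hj : EuclideanSpace ℝ (Fin d) × ℝ → ℝ)
    (hC2i : ContDiff ℝ 2 Hi) (hC2j : ContDiff ℝ 2 Hj)
    (hposi : ∀ P v : EuclideanSpace ℝ (Fin d) × ℝ, v ≠ 0 →
      0 < iteratedFDeriv ℝ 2 Hi P ![v, v])
    (hposj : ∀ P v : EuclideanSpace ℝ (Fin d) × ℝ, v ≠ 0 →
      0 < iteratedFDeriv ℝ 2 Hj P ![v, v])
    (hsupi : ∀ M : ℝ, ∃ R : ℝ, ∀ P : EuclideanSpace ℝ (Fin d) × ℝ, R ≤ ‖P‖ → M * ‖P‖ ≤ Hi P)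
    (hsupj : ∀ M : ℝ, ∃ R : ℝ, ∀ P : EuclideanSpace ℝ (Fin d) × ℝ, R ≤ ‖P‖ → M * ‖P‖ ≤ Hj P)
    (A : EuclideanSpace ℝ (Fin d) → ℝ)
    (hAC2 : ContDiff ℝ 2 A)
    (hApos : ∀ p' v : EuclideanSpace ℝ (Fin d), v ≠ 0 →
      0 < iteratedFDeriv ℝ 2 A p' ![v, v])
    (hAbound : ∀ p' : EuclideanSpace ℝ (Fin d),
      (⨅ p : ℝ, Hi (p', p)) ≤ A p' ∧ (⨅ p : ℝ, Hj (p', p)) ≤ A p')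
    -- argmins and partial inverses
    (ρi ρj : EuclideanSpace ℝ (Fin d) → ℝ)
    (hρi : ∀ p', (∀ q : ℝ, Hi (p', ρi p') ≤ Hi (p', q)) ∧
      ∀ p : ℝ, (∀ q : ℝ, Hi (p', p) ≤ Hi (p', q)) → p = ρi p')
    (hρj : ∀ p', (∀ q : ℝ, Hj (p', ρj p') ≤ Hj (p', q)) ∧
      ∀ p : ℝ, (∀ q : ℝ, Hj (p', p) ≤ Hj (p', q)) → p = ρj p')
    (πip : EuclideanSpace ℝ (Fin d) → ℝ → ℝ)
    (hπip : ∀ (p' : EuclideanSpace ℝ (Fin d)) (lam : ℝ), Hi (p', ρi p') ≤ lam →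
      ρi p' ≤ πip p' lam ∧ Hi (p', πip p' lam) = lam ∧
      ∀ p : ℝ, ρi p' ≤ p → Hi (p', p) = lam → p = πip p' lam)
    (πjm : EuclideanSpace ℝ (Fin d) → ℝ → ℝ)
    (hπjm : ∀ (p' : EuclideanSpace ℝ (Fin d)) (lam : ℝ), Hj (p', ρj p') ≤ lam →
      πjm p' lam ≤ ρj p' ∧ Hj (p', πjm p' lam) = lam ∧
      ∀ p : ℝ, p ≤ ρj p' → Hj (p', p) = lam → p = πjm p' lam)
    -- the two maximisers
    (z' : EuclideanSpace ℝ (Fin d)) (zi zj : ℝ) (hzi : 0 ≤ zi) (hzj : zj ≤ 0)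
    (p' q' : EuclideanSpace ℝ (Fin d)) (pi pj qi qj lam mu : ℝ)
    (hfeasP : Hi (p', pi) = lam ∧ Hj (p', pj) = lam ∧ A p' ≤ lam)
    (hfeasQ : Hi (q', qi) = mu ∧ Hj (q', qj) = mu ∧ A q' ≤ mu)
    (hvals : ⟪p', z'⟫ + pi * zi + pj * zj - lam = ⟪q', z'⟫ + qi * zi + qj * zj - mu)
    (hmax : IsGreatest {v : ℝ | ∃ (r' : EuclideanSpace ℝ (Fin d)) (ri rj nu : ℝ),
        Hi (r', ri) = nu ∧ Hj (r', rj) = nu ∧ A r' ≤ nu ∧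
        v = ⟪r', z'⟫ + ri * zi + rj * zj - nu}
      (⟪p', z'⟫ + pi * zi + pj * zj - lam))
    (ai aj a0 : ℝ) (hai : 0 ≤ ai) (haj : 0 ≤ aj) (ha0 : 0 ≤ a0)
    (hasum : ai + aj + a0 = 1)
    (heqPi : zi = ai * deriv (fun p : ℝ => Hi (p', p)) pi)
    (heqPj : zj = aj * deriv (fun p : ℝ => Hj (p', p)) pj)
    (heqP' : z' = ai • gradient (fun r : EuclideanSpace ℝ (Fin d) => Hi (r, pi)) p'
        + aj • gradient (fun r : EuclideanSpace ℝ (Fin d) => Hj (r, pj)) p'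
        + a0 • gradient A p')
    (bi bj b0 : ℝ) (hbi : 0 ≤ bi) (hbj : 0 ≤ bj) (hb0 : 0 ≤ b0)
    (hbsum : bi + bj + b0 = 1)
    (heqQi : zi = bi * deriv (fun p : ℝ => Hi (q', p)) qi)
    (heqQj : zj = bj * deriv (fun p : ℝ => Hj (q', p)) qj)
    (heqQ' : z' = bi • gradient (fun r : EuclideanSpace ℝ (Fin d) => Hi (r, qi)) q'
        + bj • gradient (fun r : EuclideanSpace ℝ (Fin d) => Hj (r, qj)) q'
        + b0 • gradient A q') :
    lam = mu ∧ p' = q' ∧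
    ((pi = qi ∧ pi = πip p' lam) ∨ (ai = 0 ∧ bi = 0 ∧ zi = 0)) ∧
    ((pj = qj ∧ pj = πjm p' lam) ∨ (aj = 0 ∧ bj = 0 ∧ zj = 0)) ∧
    (⟪p', z'⟫ + pi * zi + pj * zj - lam
      = ⟪p', z'⟫ + πip p' lam * zi + πjm p' lam * zj - lam) ∧
    zi = ai * deriv (fun p : ℝ => Hi (p', p)) (πip p' lam) ∧
    zj = aj * deriv (fun p : ℝ => Hj (p', p)) (πjm p' lam) ∧
    z' = ai • gradient (fun r : EuclideanSpace ℝ (Fin d) => Hi (r, πip p' lam)) p'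
        + aj • gradient (fun r : EuclideanSpace ℝ (Fin d) => Hj (r, πjm p' lam)) p'
        + a0 • gradient A p' := by
  obtain ⟨hPi, hPj, hPA⟩ := hfeasP
  obtain ⟨hQi, hQj, hQA⟩ := hfeasQ
  have sci := vmu_strictConvexOn hC2i hposi
  have scj := vmu_strictConvexOn hC2j hposj
  have scA := vmu_strictConvexOn hAC2 hApos
  -- Step 1: lam = mu ∧ p' = q'
  have hlp : lam = mu ∧ p' = q' := by
    set m' : EuclideanSpace ℝ (Fin d) := (1/2 : ℝ) • p' + (1/2 : ℝ) • q' with hm'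
    set mi : ℝ := (1/2) * pi + (1/2) * qi with hmi
    set mj : ℝ := (1/2) * pj + (1/2) * qj with hmj
    set nm : ℝ := (1/2) * lam + (1/2) * mu with hnm
    have hstr : ∀ (H : EuclideanSpace ℝ (Fin d) × ℝ → ℝ),
        StrictConvexOn ℝ Set.univ H →
        ∀ (X Y : EuclideanSpace ℝ (Fin d) × ℝ), X ≠ Y →
        H ((1/2 : ℝ) • X + (1/2 : ℝ) • Y) < (1/2) * H X + (1/2) * H Y := by
      intro H hsc X Y hne
      have := hsc.2 (Set.mem_univ X) (Set.mem_univ Y) hne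
        (by norm_num : (0:ℝ) < 1/2) (by norm_num : (0:ℝ) < 1/2) (by norm_num)
      simpa [smul_eq_mul] using this
    have hmid_i : ((m', mi) : EuclideanSpace ℝ (Fin d) × ℝ)
        = (1/2 : ℝ) • ((p', pi) : EuclideanSpace ℝ (Fin d) × ℝ)
          + (1/2 : ℝ) • ((q', qi) : EuclideanSpace ℝ (Fin d) × ℝ) := by
      rw [Prod.smul_mk, Prod.smul_mk, Prod.mk_add_mk, smul_eq_mul, smul_eq_mul]
    have hmid_j : ((m', mj) : EuclideanSpace ℝ (Fin d) × ℝ)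
        = (1/2 : ℝ) • ((p', pj) : EuclideanSpace ℝ (Fin d) × ℝ)
          + (1/2 : ℝ) • ((q', qj) : EuclideanSpace ℝ (Fin d) × ℝ) := by
      rw [Prod.smul_mk, Prod.smul_mk, Prod.mk_add_mk, smul_eq_mul, smul_eq_mul]
    -- bounds
    have hile : Hi (m', mi) ≤ nm := by
      rcases eq_or_ne ((p', pi) : EuclideanSpace ℝ (Fin d) × ℝ) ((q', qi)) with he | hne
      · have hmulam : mu = lam := by rw [← hQi, ← he, hPi]
        rw [hmid_i, ← he, Convex.combo_self (by norm_num) ((p', pi) :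
          EuclideanSpace ℝ (Fin d) × ℝ), hPi]
        rw [hnm, hmulam]; linarith only []
      · have := hstr Hi sci _ _ hne
        rw [← hmid_i, hPi, hQi] at this
        rw [hnm]; linarith only [this]
    have hjle : Hj (m', mj) ≤ nm := by
      rcases eq_or_ne ((p', pj) : EuclideanSpace ℝ (Fin d) × ℝ) ((q', qj)) with he | hne
      · have hmulam : mu = lam := by rw [← hQj, ← he, hPj]
        rw [hmid_j, ← he, Convex.combo_self (by norm_num) ((p', pj) :
          EuclideanSpace ℝ (Fin d) × ℝ), hPj]
        rw [hnm, hmulam]; linarith only []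
      · have := hstr Hj scj _ _ hne
        rw [← hmid_j, hPj, hQj] at this
        rw [hnm]; linarith only [this]
    have hAconv : A m' ≤ (1/2) * A p' + (1/2) * A q' := by
      have := scA.convexOn.2 (Set.mem_univ p') (Set.mem_univ q')
        (by norm_num : (0:ℝ) ≤ 1/2) (by norm_num : (0:ℝ) ≤ 1/2) (by norm_num)
      rw [hm']
      simpa [smul_eq_mul] using this
    have hAle : A m' ≤ nm := by rw [hnm]; linarith only [hAconv, hPA, hQA]
    -- equality implications
    have hieq : Hi (m', mi) = nm → ((p', pi) : EuclideanSpace ℝ (Fin d) × ℝ) = (q', qi) := by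
      intro heq; by_contra hne
      have := hstr Hi sci _ _ hne
      rw [← hmid_i, hPi, hQi, heq, hnm] at this
      linarith only [this]
    have hjeq : Hj (m', mj) = nm → ((p', pj) : EuclideanSpace ℝ (Fin d) × ℝ) = (q', qj) := by
      intro heq; by_contra hne
      have := hstr Hj scj _ _ hne
      rw [← hmid_j, hPj, hQj, heq, hnm] at this
      linarith only [this]
    have hAeq : A m' = nm → lam = mu ∧ p' = q' := by
      intro heq
      have hpq : p' = q' := by
        by_contra hne
        have hh := scA.2 (Set.mem_univ p') (Set.mem_univ q') hne
          (by norm_num : (0:ℝ) < 1/2) (by norm_num : (0:ℝ) < 1/2) (by norm_num)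
        rw [← hm'] at hh
        simp only [smul_eq_mul] at hh
        rw [heq, hnm] at hh
        linarith only [hh, hAconv, hPA, hQA]
      have hmp : m' = p' := by
        rw [hm', hpq, Convex.combo_self (by norm_num) q']
      rw [hmp] at heq
      have hAq : A q' = A p' := by rw [hpq]
      constructor
      · rw [hnm] at heq; linarith only [heq, hPA, hQA, hAq]
      · exact hpq
    -- replacement point
    set ns : ℝ := max (max (Hi (m', mi)) (Hj (m', mj))) (A m') with hns
    have h1 : Hi (m', mi) ≤ ns := le_trans (le_max_left _ _) (le_max_left _ _)
    have h2 : Hj (m', mj) ≤ ns := le_trans (le_max_right _ _) (le_max_left _ _)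
    have h3 : A m' ≤ ns := le_max_right _ _
    have hnsle : ns ≤ nm := max_le (max_le hile hjle) hAle
    obtain ⟨hπ1, hπ2, hπ3⟩ := hπip m' ns (le_trans ((hρi m').1 mi) h1)
    obtain ⟨hπ4, hπ5, hπ6⟩ := hπjm m' ns (le_trans ((hρj m').1 mj) h2)
    have hmem : (⟪m', z'⟫ + πip m' ns * zi + πjm m' ns * zj - ns) ∈
        {v : ℝ | ∃ (r' : EuclideanSpace ℝ (Fin d)) (ri rj nu : ℝ),
          Hi (r', ri) = nu ∧ Hj (r', rj) = nu ∧ A r' ≤ nu ∧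
          v = ⟪r', z'⟫ + ri * zi + rj * zj - nu} :=
      ⟨m', πip m' ns, πjm m' ns, ns, hπ2, hπ5, h3, rfl⟩
    have hle := hmax.2 hmem
    have hmi_le : mi ≤ πip m' ns := by
      by_contra hlt
      push_neg at hlt
      have hx : Hi (m', πip m' ns) < Hi (m', mi) :=
        vmu_strictMono_right (vmu_slice sci m') (fun q => (hρi m').1 q) hπ1 hlt
      rw [hπ2] at hx
      linarith only [hx, h1]
    have hmj_ge : πjm m' ns ≤ mj := by
      by_contra hlt
      push_neg at hlt
      have hx : Hj (m', πjm m' ns) < Hj (m', mj) :=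
        vmu_strictMono_left (vmu_slice scj m') (fun q => (hρj m').1 q) hlt hπ4
      rw [hπ5] at hx
      linarith only [hx, h2]
    have hinner : ⟪m', z'⟫ = (1/2) * ⟪p', z'⟫ + (1/2) * ⟪q', z'⟫ := by
      rw [hm', inner_add_left, real_inner_smul_left, real_inner_smul_left]
    have hprod1 : mi * zi ≤ πip m' ns * zi := mul_le_mul_of_nonneg_right hmi_le hzi
    have hprod2 : mj * zj ≤ πjm m' ns * zj := mul_le_mul_of_nonpos_right hmj_ge hzj
    have e1 : mi * zi = (1/2) * (pi * zi) + (1/2) * (qi * zi) := by rw [hmi]; ring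
    have e2 : mj * zj = (1/2) * (pj * zj) + (1/2) * (qj * zj) := by rw [hmj]; ring
    clear_value m' mi mj nm ns
    have hns_eq : ns = nm := by
      have c1 : ⟪m', z'⟫ + mi * zi + mj * zj - ns
          ≤ ⟪p', z'⟫ + pi * zi + pj * zj - lam := by
        linarith only [hle, hprod1, hprod2]
      have hkey2 : nm ≤ ns := by
        rw [hnm]
        linarith only [c1, hinner, e1, e2, hvals]
      exact le_antisymm hnsle hkey2
    have hcase : Hi (m', mi) = nm ∨ Hj (m', mj) = nm ∨ A m' = nm := by
      rcases max_choice (max (Hi (m', mi)) (Hj (m', mj))) (A m') with h | h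
      · rcases max_choice (Hi (m', mi)) (Hj (m', mj)) with h' | h'
        · left; rw [← hns_eq, hns, h, h']
        · right; left; rw [← hns_eq, hns, h, h']
      · right; right; rw [← hns_eq, hns, h]
    rcases hcase with hcc | hcc | hcc
    · have he := hieq hcc
      have hp : p' = q' := congrArg Prod.fst he
      exact ⟨by rw [← hPi, ← hQi, he], hp⟩
    · have he := hjeq hcc
      have hp : p' = q' := congrArg Prod.fst he
      exact ⟨by rw [← hPj, ← hQj, he], hp⟩
    · exact hAeq hcc
  obtain ⟨hlm, hpq⟩ := hlp
  subst hlm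
  subst hpq
  -- Step 2
  obtain ⟨hπ1, hπ2, hπ3⟩ := hπip p' lam (le_trans ((hρi p').1 pi) (le_of_eq hPi))
  obtain ⟨hπ4, hπ5, hπ6⟩ := hπjm p' lam (le_trans ((hρj p').1 pj) (le_of_eq hPj))
  have hle := hmax.2 ⟨p', πip p' lam, πjm p' lam, lam, hπ2, hπ5, hPA, rfl⟩
  have hpi_le : pi ≤ πip p' lam := by
    by_contra hlt
    push_neg at hlt
    have hx : Hi (p', πip p' lam) < Hi (p', pi) :=
      vmu_strictMono_right (vmu_slice sci p') (fun q => (hρi p').1 q) hπ1 hlt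
    rw [hπ2, hPi] at hx
    exact absurd hx (lt_irrefl _)
  have hqi_le : qi ≤ πip p' lam := by
    by_contra hlt
    push_neg at hlt
    have hx : Hi (p', πip p' lam) < Hi (p', qi) :=
      vmu_strictMono_right (vmu_slice sci p') (fun q => (hρi p').1 q) hπ1 hlt
    rw [hπ2, hQi] at hx
    exact absurd hx (lt_irrefl _)
  have hpj_ge : πjm p' lam ≤ pj := by
    by_contra hlt
    push_neg at hlt
    have hx : Hj (p', πjm p' lam) < Hj (p', pj) :=
      vmu_strictMono_left (vmu_slice scj p') (fun q => (hρj p').1 q) hlt hπ4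
    rw [hπ5, hPj] at hx
    exact absurd hx (lt_irrefl _)
  have hqj_ge : πjm p' lam ≤ qj := by
    by_contra hlt
    push_neg at hlt
    have hx : Hj (p', πjm p' lam) < Hj (p', qj) :=
      vmu_strictMono_left (vmu_slice scj p') (fun q => (hρj p').1 q) hlt hπ4
    rw [hπ5, hQj] at hx
    exact absurd hx (lt_irrefl _)
  have a1 : 0 ≤ (πip p' lam - pi) * zi := mul_nonneg (by linarith only [hpi_le]) hzi
  have a2 : 0 ≤ (πjm p' lam - pj) * zj := by
    have h := mul_nonneg (neg_nonneg.mpr (show πjm p' lam - pj ≤ 0 by linarith only [hpj_ge]))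
      (neg_nonneg.mpr hzj)
    rwa [neg_mul_neg] at h
  have b1 : 0 ≤ (πip p' lam - qi) * zi := mul_nonneg (by linarith only [hqi_le]) hzi
  have b2 : 0 ≤ (πjm p' lam - qj) * zj := by
    have h := mul_nonneg (neg_nonneg.mpr (show πjm p' lam - qj ≤ 0 by linarith only [hqj_ge]))
      (neg_nonneg.mpr hzj)
    rwa [neg_mul_neg] at h
  have hsump : (πip p' lam - pi) * zi + (πjm p' lam - pj) * zj ≤ 0 := by
    have hexp : (πip p' lam - pi) * zi + (πjm p' lam - pj) * zj
        = (⟪p', z'⟫ + πip p' lam * zi + πjm p' lam * zj - lam)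
          - (⟪p', z'⟫ + pi * zi + pj * zj - lam) := by ring
    rw [hexp]
    linarith only [hle]
  have hsumq : (πip p' lam - qi) * zi + (πjm p' lam - qj) * zj ≤ 0 := by
    have hexp : (πip p' lam - qi) * zi + (πjm p' lam - qj) * zj
        = (⟪p', z'⟫ + πip p' lam * zi + πjm p' lam * zj - lam)
          - (⟪p', z'⟫ + qi * zi + qj * zj - lam) := by ring
    rw [hexp]
    linarith only [hle, hvals]
  have t1 : (πip p' lam - pi) * zi = 0 := le_antisymm (by linarith only [hsump, a2]) a1
  have t2 : (πjm p' lam - pj) * zj = 0 := le_antisymm (by linarith only [hsump, a1]) a2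
  have t1q : (πip p' lam - qi) * zi = 0 := le_antisymm (by linarith only [hsumq, b2]) b1
  have t2q : (πjm p' lam - qj) * zj = 0 := le_antisymm (by linarith only [hsumq, b1]) b2
  have e1 : πip p' lam * zi = pi * zi := by linear_combination t1
  have e2 : πjm p' lam * zj = pj * zj := by linear_combination t2
  have e1q : πip p' lam * zi = qi * zi := by linear_combination t1q
  have e2q : πjm p' lam * zj = qj * zj := by linear_combination t2q
  -- Conjunct 3
  have conj3 : (pi = qi ∧ pi = πip p' lam) ∨ (ai = 0 ∧ bi = 0 ∧ zi = 0) := by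
    rcases lt_or_eq_of_le hzi with hz | hz
    · left
      have h1 : πip p' lam = pi := mul_right_cancel₀ hz.ne' e1
      have h2 : πip p' lam = qi := mul_right_cancel₀ hz.ne' e1q
      exact ⟨by rw [← h1, ← h2], h1.symm⟩
    · have hcgi : ConvexOn ℝ Set.univ (fun p : ℝ => Hi (p', p)) :=
        (vmu_slice sci p').convexOn
      have hdgi : Differentiable ℝ (fun p : ℝ => Hi (p', p)) :=
        (hC2i.comp (ContDiff.prodMk (contDiff_const (c := p')) contDiff_id)).differentiable (by norm_num)
      rcases lt_or_eq_of_le hai with ha | ha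
      · have hd0 : deriv (fun p : ℝ => Hi (p', p)) pi = 0 := by
          have hh := heqPi
          rw [← hz] at hh
          rcases mul_eq_zero.mp hh.symm with h | h
          · exact absurd h ha.ne'
          · exact h
        have hminp := vmu_min_of_deriv_zero hcgi hdgi hd0
        have hpiρ : pi = ρi p' := (hρi p').2 pi hminp
        have hρlam : Hi (p', ρi p') = lam := by rw [← hpiρ]; exact hPi
        have hπρ : ρi p' = πip p' lam := hπ3 (ρi p') le_rfl hρlam
        have hminq : ∀ q, Hi (p', qi) ≤ Hi (p', q) := fun q => by
          rw [hQi, ← hρlam]; exact (hρi p').1 q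
        have hqiρ : qi = ρi p' := (hρi p').2 qi hminq
        left
        exact ⟨by rw [hpiρ, hqiρ], by rw [hpiρ, hπρ]⟩
      · rcases lt_or_eq_of_le hbi with hb | hb
        · have hd0 : deriv (fun p : ℝ => Hi (p', p)) qi = 0 := by
            have hh := heqQi
            rw [← hz] at hh
            rcases mul_eq_zero.mp hh.symm with h | h
            · exact absurd h hb.ne'
            · exact h
          have hminq := vmu_min_of_deriv_zero hcgi hdgi hd0
          have hqiρ : qi = ρi p' := (hρi p').2 qi hminq
          have hρlam : Hi (p', ρi p') = lam := by rw [← hqiρ]; exact hQi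
          have hπρ : ρi p' = πip p' lam := hπ3 (ρi p') le_rfl hρlam
          have hminp : ∀ q, Hi (p', pi) ≤ Hi (p', q) := fun q => by
            rw [hPi, ← hρlam]; exact (hρi p').1 q
          have hpiρ : pi = ρi p' := (hρi p').2 pi hminp
          left
          exact ⟨by rw [hpiρ, hqiρ], by rw [hpiρ, hπρ]⟩
        · right; exact ⟨ha.symm, hb.symm, hz.symm⟩
  have conj4 : (pj = qj ∧ pj = πjm p' lam) ∨ (aj = 0 ∧ bj = 0 ∧ zj = 0) := by
    rcases lt_or_eq_of_le hzj with hz | hz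
    · left
      have h1 : πjm p' lam = pj := mul_right_cancel₀ hz.ne e2
      have h2 : πjm p' lam = qj := mul_right_cancel₀ hz.ne e2q
      exact ⟨by rw [← h1, ← h2], h1.symm⟩
    · have hcgj : ConvexOn ℝ Set.univ (fun p : ℝ => Hj (p', p)) :=
        (vmu_slice scj p').convexOn
      have hdgj : Differentiable ℝ (fun p : ℝ => Hj (p', p)) :=
        (hC2j.comp (ContDiff.prodMk (contDiff_const (c := p')) contDiff_id)).differentiable (by norm_num)
      rcases lt_or_eq_of_le haj with ha | ha
      · have hd0 : deriv (fun p : ℝ => Hj (p', p)) pj = 0 := by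
          have hh := heqPj
          rw [hz] at hh
          rcases mul_eq_zero.mp hh.symm with h | h
          · exact absurd h ha.ne'
          · exact h
        have hminp := vmu_min_of_deriv_zero hcgj hdgj hd0
        have hpjρ : pj = ρj p' := (hρj p').2 pj hminp
        have hρlam : Hj (p', ρj p') = lam := by rw [← hpjρ]; exact hPj
        have hπρ : ρj p' = πjm p' lam := hπ6 (ρj p') le_rfl hρlam
        have hminq : ∀ q, Hj (p', qj) ≤ Hj (p', q) := fun q => by
          rw [hQj, ← hρlam]; exact (hρj p').1 q
        have hqjρ : qj = ρj p' := (hρj p').2 qj hminq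
        left
        exact ⟨by rw [hpjρ, hqjρ], by rw [hpjρ, hπρ]⟩
      · rcases lt_or_eq_of_le hbj with hb | hb
        · have hd0 : deriv (fun p : ℝ => Hj (p', p)) qj = 0 := by
            have hh := heqQj
            rw [hz] at hh
            rcases mul_eq_zero.mp hh.symm with h | h
            · exact absurd h hb.ne'
            · exact h
          have hminq := vmu_min_of_deriv_zero hcgj hdgj hd0
          have hqjρ : qj = ρj p' := (hρj p').2 qj hminq
          have hρlam : Hj (p', ρj p') = lam := by rw [← hqjρ]; exact hQj
          have hπρ : ρj p' = πjm p' lam := hπ6 (ρj p') le_rfl hρlam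
          have hminp : ∀ q, Hj (p', pj) ≤ Hj (p', q) := fun q => by
            rw [hPj, ← hρlam]; exact (hρj p').1 q
          have hpjρ : pj = ρj p' := (hρj p').2 pj hminp
          left
          exact ⟨by rw [hpjρ, hqjρ], by rw [hpjρ, hπρ]⟩
        · right; exact ⟨ha.symm, hb.symm, hz⟩
  refine ⟨rfl, rfl, conj3, conj4, by linarith only [e1, e2], ?_, ?_, ?_⟩
  · rcases conj3 with ⟨h1, h2⟩ | ⟨h1, h2, h3⟩
    · rw [← h2]; exact heqPi
    · rw [h3, h1, zero_mul]
  · rcases conj4 with ⟨h1, h2⟩ | ⟨h1, h2, h3⟩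
    · rw [← h2]; exact heqPj
    · rw [h3, h1, zero_mul]
  · have h8i : ai • gradient (fun r : EuclideanSpace ℝ (Fin d) => Hi (r, pi)) p'
        = ai • gradient (fun r : EuclideanSpace ℝ (Fin d) => Hi (r, πip p' lam)) p' := by
      rcases conj3 with ⟨h1, h2⟩ | ⟨h1, _, _⟩
      · rw [← h2]
      · rw [h1]; simp
    have h8j : aj • gradient (fun r : EuclideanSpace ℝ (Fin d) => Hj (r, pj)) p'
        = aj • gradient (fun r : EuclideanSpace ℝ (Fin d) => Hj (r, πjm p' lam)) p' := by
      rcases conj4 with ⟨h1, h2⟩ | ⟨h1, _, _⟩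
      · rw [← h2]
      · rw [h1]; simp
    rw [← h8i, ← h8j]
    exact heqP'
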